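/- Positive dependence in vertex-arc random digraphs: for any probability space (Ω,μ), any measurable φ : Ω × Ω → [0,1], and any 2 ≤ m ≤ n, the VARD D(n,Ω,μ,φ) satisfies P({(1,2),(1,3),…,(1,m)} ⊆ A(D)) ≥ P((1,2) ∈ A(D))^{m−1}; equivalently, ∫ ∏_{i=2}^{m} φ(x₁,x_i) dμ^m(x₁,…,x_m) ≥ ( ∫∫ φ(x,y) dμ(x)dμ(y) )^{m−1}. -/

import Mathlib

open MeasureTheory Finset

lemma integrable_of_le_one {α : Type*} [MeasurableSpace α] (μ : Measure α) [IsFiniteMeasure μ]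
    {f : α → ℝ} (hf : AEStronglyMeasurable f μ) (h1 : ∀ x, |f x| ≤ 1) : Integrable f μ :=
  ⟨hf, HasFiniteIntegral.of_bounded (C := 1) (Filter.Eventually.of_forall h1)⟩

theorem stmt12 {n m : ℕ} (hm : 2 ≤ m) (hmn : m ≤ n)
    {Ω : Type*} [MeasurableSpace Ω] (μ : Measure Ω) [IsProbabilityMeasure μ]
    (φ : Ω → Ω → ℝ) (hmeas : Measurable (Function.uncurry φ))
    (hφ : ∀ x y, φ x y ∈ Set.Icc (0 : ℝ) 1) :
    (∫ x : Fin m → Ω,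
        ∏ i ∈ Finset.univ.erase (⟨0, by omega⟩ : Fin m), φ (x ⟨0, by omega⟩) (x i)
          ∂(Measure.pi fun _ : Fin m => μ)) ≥
      (∫ x, ∫ y, φ x y ∂μ ∂μ) ^ (m - 1) := by
  obtain ⟨k, rfl⟩ : ∃ k, m = k + 1 := ⟨m - 1, by omega⟩
  simp only [Fin.mk_zero, Nat.add_sub_cancel]
  letI : MeasureSpace Ω := ⟨μ⟩
  set f : Ω → ℝ := fun a => ∫ y, φ a y ∂μ with hf
  have hφa : ∀ a, Measurable (φ a) := fun a => hmeas.of_uncurry_left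
  have hφint : ∀ a, Integrable (φ a) μ := fun a =>
    integrable_of_le_one μ (hφa a).aestronglyMeasurable
      (fun y => abs_le.2 ⟨by linarith [(hφ a y).1], (hφ a y).2⟩)
  have hf01 : ∀ a, f a ∈ Set.Icc (0:ℝ) 1 := by
    intro a
    constructor
    · exact integral_nonneg fun y => (hφ a y).1
    · calc ∫ y, φ a y ∂μ ≤ ∫ _, (1:ℝ) ∂μ :=
            integral_mono (hφint a) (integrable_const 1) fun y => (hφ a y).2
        _ = 1 := by simp
  have hfmeas : StronglyMeasurable f := hmeas.stronglyMeasurable.integral_prod_right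
  have hfint : Integrable f μ :=
    integrable_of_le_one μ hfmeas.aestronglyMeasurable
      (fun a => abs_le.2 ⟨by linarith [(hf01 a).1], (hf01 a).2⟩)
  -- Step 1: rewrite LHS as a double integral
  have e := MeasurableEquiv.piFinSuccAbove (fun _ : Fin (k+1) => Ω) 0
  have hmp := measurePreserving_piFinSuccAbove (fun _ : Fin (k+1) => μ) 0
  set g : Ω × (Fin k → Ω) → ℝ := fun p => ∏ j : Fin k, φ p.1 (p.2 j) with hg
  have hgmeas : Measurable g := by
    apply Finset.measurable_prod
    intro j _
    exact hmeas.comp (measurable_fst.prodMk ((measurable_pi_apply j).comp measurable_snd))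
  have hg01 : ∀ p, g p ∈ Set.Icc (0:ℝ) 1 := by
    intro p
    constructor
    · exact Finset.prod_nonneg fun j _ => (hφ _ _).1
    · exact Finset.prod_le_one (fun j _ => (hφ _ _).1) (fun j _ => (hφ _ _).2)
  have hgint : Integrable g ((μ : Measure Ω).prod (Measure.pi fun _ : Fin k => μ)) :=
    integrable_of_le_one _ hgmeas.aestronglyMeasurable
      (fun p => abs_le.2 ⟨by linarith [(hg01 p).1], (hg01 p).2⟩)
  have herase : (Finset.univ.erase (0 : Fin (k+1))) = Finset.univ.image Fin.succ := by
    ext i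
    simp only [Finset.mem_erase, Finset.mem_univ, and_true, Finset.mem_image, true_and]
    constructor
    · intro hi
      obtain ⟨j, rfl⟩ := Fin.eq_succ_of_ne_zero hi
      exact ⟨j, rfl⟩
    · rintro ⟨j, rfl⟩
      exact Fin.succ_ne_zero j
  have step1 : (∫ x : Fin (k+1) → Ω,
        ∏ i ∈ Finset.univ.erase (0 : Fin (k+1)), φ (x 0) (x i)
          ∂(Measure.pi fun _ : Fin (k+1) => μ))
      = ∫ p, g p ∂((μ : Measure Ω).prod (Measure.pi fun _ : Fin k => μ)) := by
    rw [← hmp.integral_comp (MeasurableEquiv.piFinSuccAbove _ 0).measurableEmbedding g]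
    congr 1
    ext x
    simp only [hg, MeasurableEquiv.piFinSuccAbove, MeasurableEquiv.coe_mk,
      MeasurableEquiv.piFinSuccAbove_apply]
    rw [herase, Finset.prod_image (fun a _ b _ h => Fin.succ_injective _ h)]
    rfl
  rw [step1, integral_prod _ hgint]
  -- Step 2: inner integral is f a ^ k
  have step2 : ∀ a, (∫ y : Fin k → Ω, g (a, y) ∂(Measure.pi fun _ : Fin k => μ)) = f a ^ k := by
    intro a
    have : (Measure.pi fun _ : Fin k => μ) = (volume : Measure (Fin k → Ω)) := rfl
    rw [this]
    simpa [hg, hf, ← this] using integral_fintype_prod_eq_pow (ι := Fin k) (φ a) (μ := μ)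
  simp_rw [step2]
  -- Step 3: Jensen
  have hconv : ConvexOn ℝ (Set.Ici (0:ℝ)) (fun t => t ^ k) := convexOn_pow k
  have hjensen := hconv.map_integral_le (μ := μ) (f := f)
    ((continuous_pow k).continuousOn) isClosed_Ici
    (Filter.Eventually.of_forall fun a => (hf01 a).1)
    hfint
    (integrable_of_le_one μ (((continuous_pow k).comp_stronglyMeasurable hfmeas).aestronglyMeasurable)
      (fun a => by
        rw [Function.comp_apply, abs_pow]
        exact pow_le_one₀ (abs_nonneg _) (abs_le.2 ⟨by linarith [(hf01 a).1], (hf01 a).2⟩)))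
  exact hjensen
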